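/- Let K ⊂ ℝ² be a convex body possessing the stereographic property with respect to points N, S ∈ bd K and the unique support line L of K at S. Then K is a closed disc with diameter [N,S]. -/

import Mathlib

open Set Metric EuclideanGeometry Filter RealInnerProductSpace Real

noncomputable section

abbrev E2 : Type := EuclideanSpace ℝ (Fin 2)
abbrev E3 : Type := EuclideanSpace ℝ (Fin 3)

/-- A convex body: a compact convex set with nonempty interior. -/
def IsConvexBody {n : ℕ} (K : Set (EuclideanSpace ℝ (Fin n))) : Prop :=
  Convex ℝ K ∧ IsCompact K ∧ (interior K).Nonempty

/-- The line L(p,q) through two points. -/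
def lineThru {n : ℕ} (p q : EuclideanSpace ℝ (Fin n)) : Set (EuclideanSpace ℝ (Fin n)) :=
  {x | ∃ t : ℝ, x = p + t • (q - p)}

/-- The line through p with direction v. -/
def lineDir {n : ℕ} (p v : EuclideanSpace ℝ (Fin n)) : Set (EuclideanSpace ℝ (Fin n)) :=
  {x | ∃ t : ℝ, x = p + t • v}

/-- The ray from N through a. -/
def rayFrom {n : ℕ} (N a : EuclideanSpace ℝ (Fin n)) : Set (EuclideanSpace ℝ (Fin n)) :=
  {x | ∃ t : ℝ, 0 ≤ t ∧ x = N + t • (a - N)}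

/-- The hyperplane through p with normal u (a line in ℝ², a plane in ℝ³). -/
def planeNormal {n : ℕ} (p u : EuclideanSpace ℝ (Fin n)) : Set (EuclideanSpace ℝ (Fin n)) :=
  {x | ⟪x - p, u⟫ = 0}

/-- Reflection across the line through p with direction v.  In ℝ³ this map is exactly the
rotation by angle π about that line. -/
def reflAxis {n : ℕ} (p v x : EuclideanSpace ℝ (Fin n)) : EuclideanSpace ℝ (Fin n) :=
  p + ((2 * ⟪x - p, v⟫ / ⟪v, v⟫) • v - (x - p))

/-- Reflection across the hyperplane through p with normal m. -/
def reflPlane {n : ℕ} (p m x : EuclideanSpace ℝ (Fin n)) : EuclideanSpace ℝ (Fin n) :=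
  x - ((2 * ⟪x - p, m⟫ / ⟪m, m⟫) • m)

/-- The cone S_x(W) generated by W with apex x. -/
def coneHull {n : ℕ} (x : EuclideanSpace ℝ (Fin n)) (W : Set (EuclideanSpace ℝ (Fin n))) :
    Set (EuclideanSpace ℝ (Fin n)) :=
  {z | ∃ y ∈ W, ∃ l : ℝ, 0 ≤ l ∧ z = x + l • (y - x)}

/-- C_x(W), the boundary of the cone S_x(W). -/
def coneBd {n : ℕ} (x : EuclideanSpace ℝ (Fin n)) (W : Set (EuclideanSpace ℝ (Fin n))) :
    Set (EuclideanSpace ℝ (Fin n)) := frontier (coneHull x W)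

/-- P is a support hyperplane of K at S. -/
def IsSupportPlaneAt {n : ℕ} (K : Set (EuclideanSpace ℝ (Fin n))) (S : EuclideanSpace ℝ (Fin n))
    (P : Set (EuclideanSpace ℝ (Fin n))) : Prop :=
  ∃ u, u ≠ 0 ∧ P = planeNormal S u ∧ ∀ y ∈ K, ⟪y - S, u⟫ ≤ 0

/-- The stereographic property of a planar convex body K with respect to the point N and the
support line with normal u: for every chord [a,b], reflecting a, b across the bisector B of the
angle at N between L(N,a) and L(N,b) (i.e. the line through N whose reflection maps the ray
from N through a onto the ray from N through b) yields a segment parallel to the support line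
(i.e. perpendicular to its normal u). -/
def StereoProp (K : Set E2) (N u : E2) : Prop :=
  ∀ a ∈ frontier K, ∀ b ∈ frontier K, a ≠ N → b ≠ N →
    ∀ w : E2, w ≠ 0 → reflAxis N w '' rayFrom N a = rayFrom N b →
      ⟪reflAxis N w a - reflAxis N w b, u⟫ = 0

/-- f is a rotation about the line L: an orientation preserving isometry of ℝ³ fixing L
pointwise. -/
def IsRotationAbout (f : E3 → E3) (L : Set E3) : Prop :=
  ∃ (A : E3 ≃ₗᵢ[ℝ] E3) (b : E3), (∀ x, f x = A x + b) ∧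
    LinearMap.det (A.toLinearEquiv : E3 →ₗ[ℝ] E3) = 1 ∧ ∀ x ∈ L, f x = x

/-- The hypotheses of the stereographic characterization theorem (Theorem 5 of the paper):
K is a convex body, N ≠ S are boundary points, Π_S = planeNormal S u is the unique support
plane at S, Ψ is the stereographic projection from N onto Π_S, and every section K_Γ = Γ ∩ K
(Γ meeting int K, N ∉ Γ, Γ not parallel to Π_S) gives a cone C_N(K_Γ) invariant under a
rotation R^Γ by π about some line L_Γ, with Ψ(K_Γ) = R^Γ(K'_Γ) for a homothetic copy K'_Γ of
K_Γ centered at N. -/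
def StereoHyp (K : Set E3) (N S u : E3) (Ψ : E3 → E3) : Prop :=
  IsConvexBody K ∧ N ∈ frontier K ∧ S ∈ frontier K ∧ N ≠ S ∧ u ≠ 0 ∧
  IsSupportPlaneAt K S (planeNormal S u) ∧
  (∀ P, IsSupportPlaneAt K S P → P = planeNormal S u) ∧
  (∀ x ∈ K, x ≠ N → Ψ x ∈ lineThru N x ∧ Ψ x ∈ planeNormal S u) ∧
  (∀ p w : E3, w ≠ 0 → (planeNormal p w ∩ interior K).Nonempty → N ∉ planeNormal p w →
    ¬ (∃ s : ℝ, w = s • u) →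
    ∃ q v : E3, v ≠ 0 ∧
      reflAxis q v '' coneBd N (planeNormal p w ∩ K) = coneBd N (planeNormal p w ∩ K) ∧
      ∃ lam : ℝ, 0 < lam ∧
        Ψ '' (planeNormal p w ∩ K) =
          reflAxis q v '' ((fun x => N + lam • (x - N)) '' (planeNormal p w ∩ K)))

/-- The circumscribed disc of K: the closed disc of minimal radius containing K. -/
def IsCircumDisc (K : Set E2) (c : E2) (r : ℝ) : Prop :=
  K ⊆ closedBall c r ∧ ∀ c' : E2, ∀ r' : ℝ, K ⊆ closedBall c' r' → r ≤ r'

/-- An ellipse in ℝ³: the image of the unit circle under an injective affine map. -/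
def IsEllipse3 (s : Set E3) : Prop :=
  ∃ T : E2 →ᵃ[ℝ] E3, Function.Injective T ∧ s = T '' (sphere (0 : E2) 1)
lemma refl_formula (N w v : E2) (t : ℝ) :
    reflAxis N w (N + t • v) = N + t • ((2 * ⟪v, w⟫ / ⟪w, w⟫) • w - v) := by
  unfold reflAxis
  have h : N + t • v - N = t • v := by abel
  rw [h, real_inner_smul_left]
  congr 1
  rw [show 2 * (t * ⟪v, w⟫) / ⟪w, w⟫ = t * (2 * ⟪v, w⟫ / ⟪w, w⟫) by ring, mul_smul, smul_sub]

lemma exitPoint (K : Set E2) (hKcl : IsClosed K) (x y : E2) (hx : x ∈ K) (hy : y ∉ K) :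
    ∃ t : ℝ, t ∈ Icc (0:ℝ) 1 ∧ x + t • (y - x) ∈ frontier K := by
  set f : ℝ → E2 := fun t => x + t • (y - x) with hf
  have hfc : Continuous f := by fun_prop
  set T : Set ℝ := Icc (0:ℝ) 1 ∩ f ⁻¹' K with hT
  have hTc : IsCompact T := isCompact_Icc.inter_right (hKcl.preimage hfc)
  have hT0 : (0:ℝ) ∈ T := by
    constructor
    · exact ⟨le_refl _, zero_le_one⟩
    · show f 0 ∈ K
      simp [hf, hx]
  have hTne : T.Nonempty := ⟨0, hT0⟩
  set t := sSup T with ht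
  have htT : t ∈ T := hTc.sSup_mem hTne
  obtain ⟨htI, htK⟩ := htT
  have htK : f t ∈ K := htK
  have ht1 : t ≠ 1 := by
    intro h
    apply hy
    have : f 1 = y := by simp [hf]
    rw [h, this] at htK; exact htK
  have ht1' : t < 1 := lt_of_le_of_ne htI.2 ht1
  refine ⟨t, htI, ?_, ?_⟩
  · exact subset_closure htK
  · intro hint
    obtain ⟨ε, hε, hball⟩ := Metric.isOpen_iff.mp isOpen_interior _ hint
    set δ := min ((1 - t)/2) (ε / (2 * (‖y - x‖ + 1))) with hδ
    have hδ0 : 0 < δ := by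
      apply lt_min
      · linarith
      · positivity
    have hmem : t + δ ∈ T := by
      constructor
      · constructor
        · linarith [htI.1]
        · have := min_le_left ((1 - t)/2) (ε / (2 * (‖y - x‖ + 1)))
          have : δ ≤ (1-t)/2 := this
          linarith
      · show f (t + δ) ∈ K
        have : f (t + δ) ∈ Metric.ball (f t) ε := by
          have hd : dist (f (t + δ)) (f t) = δ * ‖y - x‖ := by
            simp only [hf, dist_eq_norm]
            have : x + (t + δ) • (y - x) - (x + t • (y - x)) = δ • (y - x) := by
              rw [add_smul]; abel
            rw [this, norm_smul, Real.norm_eq_abs, abs_of_pos hδ0]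
          rw [Metric.mem_ball, hd]
          have h1 : δ ≤ ε / (2 * (‖y - x‖ + 1)) := min_le_right _ _
          have h2 : (0:ℝ) ≤ ‖y - x‖ := norm_nonneg _
          calc δ * ‖y - x‖ ≤ ε / (2 * (‖y - x‖ + 1)) * ‖y - x‖ := by
                apply mul_le_mul_of_nonneg_right h1 h2
            _ < ε := by
                rw [div_mul_eq_mul_div, div_lt_iff₀ (by positivity)]
                nlinarith
        exact interior_subset (hball this)
    have := le_csSup hTc.bddAbove hmem
    linarith

lemma perp_exists (p : E2) (hp : p ≠ 0) : ∃ w : E2, w ≠ 0 ∧ ⟪p, w⟫ = 0 := by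
  refine ⟨(WithLp.equiv 2 (Fin 2 → ℝ)).symm ![-(p 1), p 0], ?_, ?_⟩
  · intro h
    apply hp
    have h0 : -(p 1) = 0 := congrArg (fun z : E2 => z 0) h
    have h1 : p 0 = 0 := congrArg (fun z : E2 => z 1) h
    ext i; fin_cases i
    · exact h1
    · simpa using h0
  · simp [PiLp.inner_apply, Fin.sum_univ_two, RCLike.inner_apply]
    ring

lemma bisector_exists (p q : E2) (hp : p ≠ 0) (hq : q ≠ 0) :
    ∃ w : E2, w ≠ 0 ∧
      (2 * ⟪p, w⟫ / ⟪w, w⟫) • w - p = (‖p‖ / ‖q‖) • q ∧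
      (2 * ⟪q, w⟫ / ⟪w, w⟫) • w - q = (‖q‖ / ‖p‖) • p := by
  set α := ‖p‖ with hα
  set β := ‖q‖ with hβ
  have hα0 : 0 < α := norm_pos_iff.mpr hp
  have hβ0 : 0 < β := norm_pos_iff.mpr hq
  by_cases h : β • p + α • q = 0
  · -- antipodal case
    have hqp : q = -((β / α) • p) := by
      have h2 : α • q = -(β • p) := by
        rw [eq_neg_iff_add_eq_zero, add_comm]; exact h
      have h3 : (α⁻¹ * α) • q = α⁻¹ • -(β • p) := by rw [mul_smul, h2]
      rw [inv_mul_cancel₀ (ne_of_gt hα0), one_smul] at h3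
      rw [h3, smul_neg, smul_smul]
      congr 2
      field_simp
    obtain ⟨w, hw, hpw⟩ := perp_exists p hp
    have hqw : ⟪q, w⟫ = 0 := by
      rw [hqp, inner_neg_left, real_inner_smul_left, hpw]; ring
    refine ⟨w, hw, ?_, ?_⟩
    · rw [hpw, hqp]
      rw [mul_zero, zero_div, zero_smul, zero_sub]
      rw [smul_neg, smul_smul]
      rw [show α / β * (β / α) = 1 by field_simp]
      rw [one_smul]
    · rw [hqw, hqp]
      rw [mul_zero, zero_div, zero_smul, zero_sub, neg_neg]
  · -- generic case
    set w := β • p + α • q with hw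
    have hpq2 : ⟪p, p⟫ = α ^ 2 := real_inner_self_eq_norm_sq p
    have hqq2 : ⟪q, q⟫ = β ^ 2 := real_inner_self_eq_norm_sq q
    set D := α * β + ⟪p, q⟫ with hD
    have hpw : ⟪p, w⟫ = α * D := by
      rw [hw, inner_add_right, real_inner_smul_right, real_inner_smul_right, hpq2, hD]; ring
    have hqw : ⟪q, w⟫ = β * D := by
      rw [hw, inner_add_right, real_inner_smul_right, real_inner_smul_right, hqq2, hD,
        real_inner_comm p q]; ring
    have hww : ⟪w, w⟫ = 2 * α * β * D := by
      have e1 : ⟪β•p, β•p⟫ = β^2*α^2 := by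
        rw [real_inner_smul_left, real_inner_smul_right, hpq2]; ring
      have e2 : ⟪β•p, α•q⟫ = β*α*⟪p,q⟫ := by
        rw [real_inner_smul_left, real_inner_smul_right]; ring
      have e3 : ⟪α•q, α•q⟫ = α^2*β^2 := by
        rw [real_inner_smul_left, real_inner_smul_right, hqq2]; ring
      rw [hw, real_inner_add_add_self, e1, e2, e3, hD]; ring
    have hwpos : (0:ℝ) < ⟪w, w⟫ :=
      lt_of_le_of_ne real_inner_self_nonneg (Ne.symm (inner_self_ne_zero.mpr h))
    have hDpos : 0 < D := by nlinarith [hwpos, hww, mul_pos hα0 hβ0]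
    have hs1 : 2 * ⟪p, w⟫ / ⟪w, w⟫ = 1 / β := by
      rw [hpw, hww]; field_simp
    have hs2 : 2 * ⟪q, w⟫ / ⟪w, w⟫ = 1 / α := by
      rw [hqw, hww]; field_simp
    refine ⟨w, h, ?_, ?_⟩
    · rw [hs1, hw]; match_scalars <;> field_simp <;> ring
    · rw [hs2, hw]; match_scalars <;> field_simp <;> ring

lemma key_lemma (K : Set E2) (N u : E2) (hst : StereoProp K N u)
    (a : E2) (ha : a ∈ frontier K) (b : E2) (hb : b ∈ frontier K)
    (haN : a ≠ N) (hbN : b ≠ N) :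
    ‖a - N‖^2 * ⟪b - N, u⟫ = ‖b - N‖^2 * ⟪a - N, u⟫ := by
  set p := a - N with hp'
  set q := b - N with hq'
  have hp : p ≠ 0 := sub_ne_zero_of_ne haN
  have hq : q ≠ 0 := sub_ne_zero_of_ne hbN
  set α := ‖p‖ with hα
  set β := ‖q‖ with hβ
  have hα0 : 0 < α := norm_pos_iff.mpr hp
  have hβ0 : 0 < β := norm_pos_iff.mpr hq
  obtain ⟨w, hw, h1, h2⟩ := bisector_exists p q hp hq
  have hray : reflAxis N w '' rayFrom N a = rayFrom N b := by
    ext x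
    simp only [rayFrom, mem_image, mem_setOf_eq]
    constructor
    · rintro ⟨y, ⟨t, ht, rfl⟩, rfl⟩
      refine ⟨t * (α / β), by positivity, ?_⟩
      rw [refl_formula, h1, smul_smul]
    · rintro ⟨t, ht, rfl⟩
      refine ⟨N + (t * (β / α)) • p, ⟨t * (β / α), by positivity, rfl⟩, ?_⟩
      rw [refl_formula, h1, smul_smul]
      congr 1
      rw [show t * (β / α) * (α / β) = t by field_simp]
  have heq := hst a ha b hb haN hbN w hw hray
  have ea : reflAxis N w a = N + (α / β) • q := by
    have : a = N + (1:ℝ) • p := by rw [one_smul, hp']; abel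
    rw [this, refl_formula, h1, one_smul]
  have eb : reflAxis N w b = N + (β / α) • p := by
    have : b = N + (1:ℝ) • q := by rw [one_smul, hq']; abel
    rw [this, refl_formula, h2, one_smul]
  rw [ea, eb, add_sub_add_left_eq_sub, inner_sub_left, real_inner_smul_left,
    real_inner_smul_left] at heq
  have hβne : β ≠ 0 := ne_of_gt hβ0
  have hαne : α ≠ 0 := ne_of_gt hα0
  set X := ⟪q, u⟫ with hX
  set Y := ⟪p, u⟫ with hY
  field_simp at heq
  linear_combination heq

lemma normal_parallel (S u u₀ : E2) (hu : u ≠ 0) (hu₀ : u₀ ≠ 0)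
    (h : planeNormal S u = planeNormal S u₀) : ∃ s : ℝ, s ≠ 0 ∧ u₀ = s • u := by
  set J : E2 := (WithLp.equiv 2 (Fin 2 → ℝ)).symm ![-(u 1), u 0] with hJ
  have hJ0 : J 0 = -(u 1) := rfl
  have hJ1 : J 1 = u 0 := rfl
  have hinner : ∀ v : E2, ⟪J, v⟫ = -(u 1) * v 0 + u 0 * v 1 := by
    intro v
    simp [PiLp.inner_apply, Fin.sum_univ_two, RCLike.inner_apply, hJ0, hJ1]
    ring
  have hmem : S + J ∈ planeNormal S u := by
    show ⟪S + J - S, u⟫ = 0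
    rw [add_sub_cancel_left, hinner]; ring
  rw [h] at hmem
  have hrel : u 0 * u₀ 1 = u 1 * u₀ 0 := by
    have : ⟪S + J - S, u₀⟫ = 0 := hmem
    rw [add_sub_cancel_left, hinner] at this
    linarith
  by_cases h0 : u 0 ≠ 0
  · have hne : u₀ 0 ≠ 0 := by
      intro hz
      apply hu₀
      have h1 : u₀ 1 = 0 := by
        have := hrel; rw [hz, mul_zero] at this
        exact (mul_eq_zero.mp this).resolve_left h0
      ext i; fin_cases i <;> assumption
    refine ⟨u₀ 0 / u 0, div_ne_zero hne h0, ?_⟩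
    ext i
    fin_cases i
    · show u₀ 0 = (u₀ 0 / u 0) * u 0
      field_simp
    · show u₀ 1 = (u₀ 0 / u 0) * u 1
      field_simp
      linarith [hrel]
  · push_neg at h0
    have h1 : u 1 ≠ 0 := by
      intro hz; apply hu; ext i; fin_cases i <;> assumption
    have hz0 : u₀ 0 = 0 := by
      have := hrel; rw [h0, zero_mul] at this
      exact (mul_eq_zero.mp this.symm).resolve_left h1
    have hne : u₀ 1 ≠ 0 := by
      intro hz; apply hu₀; ext i; fin_cases i <;> assumption
    refine ⟨u₀ 1 / u 1, div_ne_zero hne h1, ?_⟩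
    ext i
    fin_cases i
    · show u₀ 0 = (u₀ 1 / u 1) * u 0
      rw [hz0, h0, mul_zero]
    · show u₀ 1 = (u₀ 1 / u 1) * u 1
      field_simp

lemma habs (A I ρ : ℝ) (hA : 0 < A) (hρ : 0 < ρ) (hI : ρ * A ≤ I) :
    A ^ 2 * ρ ^ 2 - 2 * (A * (ρ * I)) + ρ ^ 2 * A ^ 2 ≤ 0 := by
  nlinarith [mul_pos hρ hA]

lemma hsqle (x : ℝ) (hx : 0 ≤ x) (h2 : x ^ 2 ≤ 0) : x = 0 := by nlinarith

set_option maxHeartbeats 2000000 in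
/-- A planar convex body with the stereographic property with respect to N, S and
the unique support line at S is the closed disc with diameter [N,S]. -/
theorem stmt1 (K : Set E2) (hK : IsConvexBody K) (N S : E2)
    (hN : N ∈ frontier K) (hS : S ∈ frontier K) (hNS : N ≠ S)
    (u : E2) (hu : u ≠ 0) (hsupp : IsSupportPlaneAt K S (planeNormal S u))
    (huniq : ∀ P, IsSupportPlaneAt K S P → P = planeNormal S u)
    (hst : StereoProp K N u) :
    K = closedBall (midpoint ℝ N S) (dist N S / 2) := by
  obtain ⟨hconv, hcomp, hint⟩ := hK
  have hKcl : IsClosed K := hcomp.isClosed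
  have hfK : frontier K ⊆ K := hKcl.frontier_subset
  obtain ⟨u₀, hu₀, hplane, hineq⟩ := hsupp
  obtain ⟨s, hs, hu₀u⟩ := normal_parallel S u u₀ hu hu₀ hplane
  have hu₀n : (0:ℝ) < ‖u₀‖ := norm_pos_iff.mpr hu₀
  -- key identity transferred to u₀
  have key : ∀ a ∈ frontier K, ∀ b ∈ frontier K, a ≠ N → b ≠ N →
      ‖a - N‖^2 * ⟪b - N, u₀⟫ = ‖b - N‖^2 * ⟪a - N, u₀⟫ := by
    intro a ha b hb haN hbN
    have h := key_lemma K N u hst a ha b hb haN hbN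
    rw [hu₀u, real_inner_smul_right, real_inner_smul_right]
    linear_combination s * h
  have hNK : N ∈ K := hfK hN
  have hSK : S ∈ K := hfK hS
  have hSN : S - N ≠ 0 := sub_ne_zero_of_ne (Ne.symm hNS)
  have hSNn : (0:ℝ) < ‖S - N‖ := norm_pos_iff.mpr hSN
  set c := ⟪S - N, u₀⟫ / ‖S - N‖^2 with hc
  clear_value c
  have hcirc : ∀ b ∈ frontier K, ⟪b - N, u₀⟫ = c * ‖b - N‖^2 := by
    intro b hb
    by_cases hbN : b = N
    · subst hbN; simp
    · have h := key S hS b hb (Ne.symm hNS) hbN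
      rw [hc]
      have h2 : ‖S - N‖^2 ≠ 0 := by positivity
      rw [div_mul_eq_mul_div, eq_div_iff h2]
      linear_combination h
  have hcge : 0 ≤ ⟪S - N, u₀⟫ := by
    have h := hineq N hNK
    rw [show N - S = -(S - N) by abel, inner_neg_left] at h
    linarith
  have hcne : c ≠ 0 := by
    intro h0
    have hall : ∀ b ∈ frontier K, ⟪b - N, u₀⟫ = 0 := by
      intro b hb; rw [hcirc b hb, h0, zero_mul]
    obtain ⟨x₀, hx₀⟩ := hint
    have hx₀K : x₀ ∈ K := interior_subset hx₀
    obtain ⟨R, hR⟩ := isBounded_iff_forall_norm_le.mp hcomp.isBounded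
    have hR0 : 0 ≤ R := le_trans (norm_nonneg x₀) (hR x₀ hx₀K)
    set M := (R + ‖x₀‖ + 1) / ‖u₀‖ with hM
    clear_value M
    have hM0 : 0 < M := by rw [hM]; positivity
    have hMn : M * ‖u₀‖ = R + ‖x₀‖ + 1 := by
      rw [hM]; field_simp
    have hout : ∀ ε : ℝ, |ε| = M → x₀ + ε • u₀ ∉ K := by
      intro ε hε hmem
      have hb := hR _ hmem
      have h1 : ‖ε • u₀‖ = ‖(x₀ + ε • u₀) - x₀‖ := by congr 1; abel
      have h2 : ‖(x₀ + ε • u₀) - x₀‖ ≤ ‖x₀ + ε • u₀‖ + ‖x₀‖ := norm_sub_le _ _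
      rw [norm_smul, Real.norm_eq_abs, hε] at h1
      linarith [hMn, h1, h2, hb]
    obtain ⟨t, ht, hz1⟩ := exitPoint K hKcl x₀ (x₀ + M • u₀) hx₀K
      (hout M (abs_of_pos hM0))
    obtain ⟨t', ht', hz2⟩ := exitPoint K hKcl x₀ (x₀ + (-M) • u₀) hx₀K
      (hout (-M) (by rw [abs_neg, abs_of_pos hM0]))
    have e1 : x₀ + t • (x₀ + M • u₀ - x₀) = x₀ + (t * M) • u₀ := by
      rw [add_sub_cancel_left, smul_smul]
    have e2 : x₀ + t' • (x₀ + (-M) • u₀ - x₀) = x₀ + (-(t' * M)) • u₀ := by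
      rw [add_sub_cancel_left, smul_smul]; ring_nf
    rw [e1] at hz1
    rw [e2] at hz2
    have f1 := hall _ hz1
    have f2 := hall _ hz2
    have e3 : ⟪x₀ + (t * M) • u₀ - N, u₀⟫ - ⟪x₀ + (-(t' * M)) • u₀ - N, u₀⟫
        = (t * M + t' * M) * ⟪u₀, u₀⟫ := by
      rw [← inner_sub_left]
      rw [show (x₀ + (t * M) • u₀ - N) - (x₀ + (-(t' * M)) • u₀ - N)
          = (t * M + t' * M) • u₀ by
        rw [show (t * M + t' * M) = t * M - (-(t' * M)) by ring, sub_smul]; abel]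
      exact real_inner_smul_left _ _ _
    rw [f1, f2, sub_zero] at e3
    have huu : (0:ℝ) < ⟪u₀, u₀⟫ :=
      lt_of_le_of_ne real_inner_self_nonneg (Ne.symm (inner_self_ne_zero.mpr hu₀))
    have h7 : t * M + t' * M = 0 :=
      (mul_eq_zero.mp e3.symm).resolve_right (ne_of_gt huu)
    have h8 : t * M = 0 := by
      nlinarith [mul_nonneg ht.1 hM0.le, mul_nonneg ht'.1 hM0.le]
    have ht0 : t = 0 := (mul_eq_zero.mp h8).resolve_right (ne_of_gt hM0)
    rw [ht0, zero_mul, zero_smul, add_zero] at hz1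
    rw [frontier, mem_diff] at hz1
    exact hz1.2 hx₀
  have hcpos : 0 < c := by
    have hge : 0 ≤ c := hc ▸ div_nonneg hcge (sq_nonneg _)
    exact lt_of_le_of_ne hge (Ne.symm hcne)
  set O := N + (1 / (2 * c)) • u₀ with hO
  set r := ‖u₀‖ / (2 * c) with hr'
  clear_value O r
  have hr : 0 < r := by rw [hr']; positivity
  have hsph : ∀ b ∈ frontier K, ‖b - O‖ = r := by
    intro b hb
    have h := hcirc b hb
    have hsq : ‖b - O‖^2 = r^2 := by
      have hbO : b - O = (b - N) - (1 / (2 * c)) • u₀ := by rw [hO]; abel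
      rw [hbO, norm_sub_sq_real, real_inner_smul_right, h, norm_smul, Real.norm_eq_abs,
        mul_pow, sq_abs, hr']
      field_simp
      ring
    rw [← Real.sqrt_sq (norm_nonneg (b - O)), hsq, Real.sqrt_sq hr.le]
  -- K ⊆ closedBall O r
  have hKb : K ⊆ closedBall O r := by
    intro x hx
    by_contra hxo
    rw [mem_closedBall, not_le, dist_eq_norm] at hxo
    obtain ⟨R, hR⟩ := isBounded_iff_forall_norm_le.mp hcomp.isBounded
    have hR0 : 0 ≤ R := le_trans (norm_nonneg x) (hR x hx)
    have hxO : (0:ℝ) < ‖x - O‖ := lt_trans hr hxo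
    set M := (R + ‖O‖ + 1) / ‖x - O‖ + 1 with hM
    clear_value M
    have hM1 : 1 ≤ M := by
      rw [hM]
      have h0 : 0 ≤ (R + ‖O‖ + 1) / ‖x - O‖ :=
        div_nonneg (by linarith [norm_nonneg O]) (norm_nonneg _)
      linarith
    have hMn : M * ‖x - O‖ = R + ‖O‖ + 1 + ‖x - O‖ := by
      rw [hM]; field_simp
    have hy : O + M • (x - O) ∉ K := by
      intro hmem
      have hb := hR _ hmem
      have h1 : ‖M • (x - O)‖ = ‖(O + M • (x - O)) - O‖ := by congr 1; abel
      have h2 : ‖(O + M • (x - O)) - O‖ ≤ ‖O + M • (x - O)‖ + ‖O‖ := norm_sub_le _ _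
      rw [norm_smul, Real.norm_eq_abs, abs_of_pos (by linarith)] at h1
      linarith
    obtain ⟨t, ht, hz⟩ := exitPoint K hKcl x (O + M • (x - O)) hx hy
    have hzeq : x + t • (O + M • (x - O) - x) = O + (1 + t * (M - 1)) • (x - O) := by
      have e : O + M • (x - O) - x = (M - 1) • (x - O) := by
        rw [sub_smul, one_smul]; abel
      rw [e, smul_smul, add_smul, one_smul]; abel
    rw [hzeq] at hz
    have hzr := hsph _ hz
    have hk : (0:ℝ) < 1 + t * (M - 1) := by
      have := mul_nonneg ht.1 (by linarith : (0:ℝ) ≤ M - 1)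
      linarith
    rw [add_sub_cancel_left, norm_smul, Real.norm_eq_abs, abs_of_pos hk] at hzr
    have h9 : ‖x - O‖ ≤ (1 + t * (M - 1)) * ‖x - O‖ :=
      le_mul_of_one_le_left (norm_nonneg _) (by
        have := mul_nonneg ht.1 (by linarith : (0:ℝ) ≤ M - 1); linarith)
    linarith
  -- ball O r ⊆ K
  have hib : interior K ⊆ ball O r := by
    have h1 := interior_mono hKb
    rwa [interior_closedBall O (ne_of_gt hr)] at h1
  have hball : ball O r ⊆ K := by
    intro x hxb
    by_contra hxK
    obtain ⟨x₀, hx₀⟩ := hint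
    obtain ⟨t, ht, hz⟩ := exitPoint K hKcl x₀ x (interior_subset hx₀) hxK
    have hzr := hsph _ hz
    have hcomb : x₀ + t • (x - x₀) = (1 - t) • x₀ + t • x := by
      rw [sub_smul, one_smul, smul_sub]; abel
    have hzball : x₀ + t • (x - x₀) ∈ ball O r := by
      rw [hcomb]
      exact (convex_ball O r) (hib hx₀) hxb (by linarith [ht.2]) ht.1 (by ring)
    rw [mem_ball, dist_eq_norm, hzr] at hzball
    exact lt_irrefl r hzball
  have hKeq : K = closedBall O r := by
    apply subset_antisymm hKb
    rw [← closure_ball O (ne_of_gt hr)]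
    exact hKcl.closure_subset_iff.mpr hball
  -- locate S
  have hSO : ‖S - O‖ = r := hsph S hS
  have hyK : O + (r / ‖u₀‖) • u₀ ∈ K := by
    rw [hKeq, mem_closedBall, dist_eq_norm]
    rw [add_sub_cancel_left, norm_smul, Real.norm_eq_abs, abs_of_pos (div_pos hr hu₀n)]
    rw [div_mul_cancel₀ _ (ne_of_gt hu₀n)]
  have h5 : r * ‖u₀‖ ≤ ⟪S - O, u₀⟫ := by
    have h := hineq _ hyK
    rw [show O + (r / ‖u₀‖) • u₀ - S = (r / ‖u₀‖) • u₀ - (S - O) by abel,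
      inner_sub_left, real_inner_smul_left, real_inner_self_eq_norm_sq] at h
    have : r / ‖u₀‖ * ‖u₀‖^2 = r * ‖u₀‖ := by field_simp
    linarith
  have hvec : ‖u₀‖ • (S - O) = r • u₀ := by
    have hnn : ‖‖u₀‖ • (S - O) - r • u₀‖^2 ≤ 0 := by
      rw [norm_sub_sq_real, real_inner_smul_left, real_inner_smul_right,
        norm_smul, norm_smul, Real.norm_eq_abs, Real.norm_eq_abs,
        abs_of_pos hu₀n, abs_of_pos hr, mul_pow, mul_pow, hSO]
      exact habs ‖u₀‖ ⟪S - O, u₀⟫ r hu₀n hr h5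
    have : ‖‖u₀‖ • (S - O) - r • u₀‖ = 0 :=
      hsqle _ (norm_nonneg _) hnn
    rw [norm_eq_zero, sub_eq_zero] at this
    exact this
  have hSeq : S = N + (1 / c) • u₀ := by
    have h6 : S - O = (r / ‖u₀‖) • u₀ := by
      have h9 : (‖u₀‖⁻¹ : ℝ) • (‖u₀‖ • (S - O)) = (‖u₀‖⁻¹ : ℝ) • (r • u₀) := by rw [hvec]
      rw [smul_smul, smul_smul, inv_mul_cancel₀ (ne_of_gt hu₀n), one_smul] at h9
      rw [h9, div_eq_inv_mul]
    have h7 : S = O + (r / ‖u₀‖) • u₀ := by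
      rw [← h6]; abel
    have hrdiv : r / ‖u₀‖ = 1 / (2 * c) := by
      rw [hr', div_right_comm, div_self (ne_of_gt hu₀n)]
    rw [h7, hO, hrdiv, add_assoc, ← add_smul,
      show (1 / (2 * c) + 1 / (2 * c) : ℝ) = 1 / c by
        rw [← add_div, show ((1:ℝ) + 1) = 2 * 1 by norm_num,
          mul_div_mul_left 1 c two_ne_zero]]
  have hmid : midpoint ℝ N S = O := by
    rw [hSeq, hO, midpoint_eq_smul_add, smul_add, smul_add, smul_smul]
    rw [show ((⅟2 : ℝ) * (1 / c)) = 1 / (2 * c) by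
      rw [invOf_eq_inv, show (2:ℝ)⁻¹ = 1 / 2 by norm_num, div_mul_div_comm, one_mul]]
    rw [show ((⅟2 : ℝ) • N + ((⅟2 : ℝ) • N + (1 / (2 * c)) • u₀))
        = ((⅟2 : ℝ) + (⅟2 : ℝ)) • N + (1 / (2 * c)) • u₀ by rw [add_smul]; abel]
    rw [show ((⅟2 : ℝ) + (⅟2 : ℝ)) = 1 by rw [invOf_eq_inv]; norm_num, one_smul]
  have hdist : dist N S / 2 = r := by
    rw [hSeq, dist_eq_norm, show N - (N + (1 / c) • u₀) = -((1/c) • u₀) by abel,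
      norm_neg, norm_smul, Real.norm_eq_abs, abs_of_pos (by positivity), hr',
      one_div, inv_mul_eq_div, div_div, mul_comm c 2]
  rw [hmid, hdist, hKeq]
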